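/- For every integer n, BP(n+1)² − BP(n−1)² = 8·(Q(2n+3)·1 − Q(2n+3)·i − P(2n+3)·j + P(2n+3)·ij). -/

import Mathlib

open scoped TensorProduct

noncomputable def bi : ℂ ⊗[ℝ] ℂ := Complex.I ⊗ₜ[ℝ] 1
noncomputable def bj : ℂ ⊗[ℝ] ℂ := (1 : ℂ) ⊗ₜ[ℝ] Complex.I
noncomputable def bij : ℂ ⊗[ℝ] ℂ := Complex.I ⊗ₜ[ℝ] Complex.I

/-- The bicomplex Pell number `BP n = P n + P (n+1) i + P (n+2) j + P (n+3) ij`. -/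
noncomputable def BP (P : ℤ → ℤ) (n : ℤ) : ℂ ⊗[ℝ] ℂ :=
  (P n : ℝ) • (1 : ℂ ⊗[ℝ] ℂ) + (P (n + 1) : ℝ) • bi + (P (n + 2) : ℝ) • bj +
    (P (n + 3) : ℝ) • bij

lemma bi_mul_bi : bi * bi = -1 := by
  simp [bi, Algebra.TensorProduct.tmul_mul_tmul, Complex.I_mul_I,
    TensorProduct.neg_tmul, Algebra.TensorProduct.one_def]
lemma bj_mul_bj : bj * bj = -1 := by
  simp [bj, Algebra.TensorProduct.tmul_mul_tmul, Complex.I_mul_I,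
    TensorProduct.tmul_neg, Algebra.TensorProduct.one_def]
lemma bi_mul_bj : bi * bj = bij := by
  simp [bi, bj, bij, Algebra.TensorProduct.tmul_mul_tmul]
lemma bj_mul_bi : bj * bi = bij := by
  simp [bi, bj, bij, Algebra.TensorProduct.tmul_mul_tmul]
lemma bij_mul_bij : bij * bij = 1 := by
  simp [bij, Algebra.TensorProduct.tmul_mul_tmul, Complex.I_mul_I,
    TensorProduct.neg_tmul, TensorProduct.tmul_neg, Algebra.TensorProduct.one_def]
lemma bi_mul_bij : bi * bij = -bj := by
  simp [bi, bj, bij, Algebra.TensorProduct.tmul_mul_tmul, Complex.I_mul_I,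
    TensorProduct.neg_tmul]
lemma bij_mul_bi : bij * bi = -bj := by
  simp [bi, bj, bij, Algebra.TensorProduct.tmul_mul_tmul, Complex.I_mul_I,
    TensorProduct.neg_tmul]
lemma bj_mul_bij : bj * bij = -bi := by
  simp [bi, bj, bij, Algebra.TensorProduct.tmul_mul_tmul, Complex.I_mul_I,
    TensorProduct.tmul_neg]
lemma bij_mul_bj : bij * bj = -bi := by
  simp [bi, bj, bij, Algebra.TensorProduct.tmul_mul_tmul, Complex.I_mul_I,
    TensorProduct.tmul_neg]

lemma sq_expand (a b c d : ℝ) :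
    (a • (1 : ℂ ⊗[ℝ] ℂ) + b • bi + c • bj + d • bij) ^ 2 =
      (a^2 - b^2 - c^2 + d^2) • (1 : ℂ ⊗[ℝ] ℂ) + (2*a*b - 2*c*d) • bi +
        (2*a*c - 2*b*d) • bj + (2*a*d + 2*b*c) • bij := by
  rw [sq]
  simp only [add_mul, mul_add, smul_mul_smul_comm, bi_mul_bi, bj_mul_bj, bi_mul_bj,
    bj_mul_bi, bij_mul_bij, bi_mul_bij, bij_mul_bi, bj_mul_bij, bij_mul_bj,
    one_mul, mul_one, smul_neg]
  module

lemma pell_unique (f g : ℤ → ℤ)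
    (hf : ∀ n : ℤ, f (n + 2) = 2 * f (n + 1) + f n)
    (hg : ∀ n : ℤ, g (n + 2) = 2 * g (n + 1) + g n)
    (h0 : f 0 = g 0) (h1 : f 1 = g 1) : ∀ n : ℤ, f n = g n := by
  have key : ∀ n : ℤ, f n = g n ∧ f (n + 1) = g (n + 1) := by
    intro n
    induction n using Int.induction_on with
    | zero => exact ⟨h0, h1⟩
    | succ k ih =>
      refine ⟨ih.2, ?_⟩
      have hf' := hf k; have hg' := hg k
      have e : (k : ℤ) + 1 + 1 = k + 2 := by ring
      rw [e, hf', hg', ih.1, ih.2]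
    | pred k ih =>
      have hf' := hf (-(k:ℤ) - 1); have hg' := hg (-(k:ℤ) - 1)
      have e1 : -(k : ℤ) - 1 + 2 = -k + 1 := by ring
      have e2 : -(k : ℤ) - 1 + 1 = -k := by ring
      rw [e1, e2] at hf' hg'
      rw [e2]
      obtain ⟨i1, i2⟩ := ih
      exact ⟨by omega, i1⟩
  exact fun n => (key n).1

lemma pell_add (P : ℤ → ℤ)
    (hP : ∀ n : ℤ, P (n + 2) = 2 * P (n + 1) + P n) (hP0 : P 0 = 0) (hP1 : P 1 = 1) :
    ∀ m k : ℤ, P (m + k + 1) = P (m + 1) * P (k + 1) + P m * P k := by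
  intro m
  have hP2 : P 2 = 2 := by have h := hP 0; norm_num at h; omega
  refine pell_unique (fun k => P (m + k + 1)) (fun k => P (m+1) * P (k+1) + P m * P k)
    ?_ ?_ ?_ ?_
  · intro k
    have h := hP (m + k + 1)
    have e1 : m + (k + 2) + 1 = m + k + 1 + 2 := by ring
    have e2 : m + (k + 1) + 1 = m + k + 1 + 1 := by ring
    beta_reduce
    rw [e1, e2, h]
  · intro k
    beta_reduce
    have e : k + 2 + 1 = k + 1 + 2 := by ring
    rw [e, hP k, hP (k + 1)]
    ring
  · simp only [add_zero, hP0, hP1, mul_zero, mul_one, zero_add, add_zero]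
  · beta_reduce
    have e : m + 1 + 1 = m + 2 := by ring
    rw [e, hP m, hP1, show (1:ℤ)+1 = 2 from rfl, hP2]; ring

lemma pellLucas_eq (P Q : ℤ → ℤ)
    (hP : ∀ n : ℤ, P (n + 2) = 2 * P (n + 1) + P n) (hP0 : P 0 = 0) (hP1 : P 1 = 1)
    (hQ : ∀ n : ℤ, Q (n + 2) = 2 * Q (n + 1) + Q n) (hQ0 : Q 0 = 2) (hQ1 : Q 1 = 2) :
    ∀ n : ℤ, Q n = 2 * (P (n + 1) - P n) := by
  have hP2 : P 2 = 2 := by have h := hP 0; norm_num at h; omega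
  refine pell_unique Q (fun n => 2 * (P (n + 1) - P n)) hQ ?_ ?_ ?_
  · intro k
    beta_reduce
    have e : k + 2 + 1 = k + 1 + 2 := by ring
    rw [e, hP k, hP (k + 1)]
    ring
  · simp only [zero_add, hQ0, hP0, hP1]; norm_num
  · simp only [hQ1, hP1, show (1:ℤ)+1 = 2 from rfl, hP2]; norm_num

theorem bicomplexPell_sq_sub_sq (P Q : ℤ → ℤ)
    (hP : ∀ n : ℤ, P (n + 2) = 2 * P (n + 1) + P n) (hP0 : P 0 = 0) (hP1 : P 1 = 1)
    (hQ : ∀ n : ℤ, Q (n + 2) = 2 * Q (n + 1) + Q n) (hQ0 : Q 0 = 2) (hQ1 : Q 1 = 2)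
    (n : ℤ) :
    BP P (n + 1) ^ 2 - BP P (n - 1) ^ 2 =
      (8 : ℝ) • ((Q (2 * n + 3) : ℝ) • (1 : ℂ ⊗[ℝ] ℂ) - (Q (2 * n + 3) : ℝ) • bi -
        (P (2 * n + 3) : ℝ) • bj + (P (2 * n + 3) : ℝ) • bij) := by
  -- linear recurrence values in terms of x := P n, y := P (n+1)
  have hA : P (n - 1) = P (n + 1) - 2 * P n := by
    have h := hP (n - 1)
    have e1 : n - 1 + 2 = n + 1 := by ring
    have e2 : n - 1 + 1 = n := by ring
    rw [e1, e2] at h; omega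
  have hB : P (n + 2) = 2 * P (n + 1) + P n := hP n
  have hC : P (n + 3) = 5 * P (n + 1) + 2 * P n := by
    have h := hP (n + 1)
    have e1 : n + 1 + 2 = n + 3 := by ring
    have e2 : n + 1 + 1 = n + 2 := by ring
    rw [e1, e2, hB] at h; omega
  have hD : P (n + 4) = 12 * P (n + 1) + 5 * P n := by
    have h := hP (n + 2)
    have e1 : n + 2 + 2 = n + 4 := by ring
    have e2 : n + 2 + 1 = n + 3 := by ring
    rw [e1, e2, hB, hC] at h; omega
  -- doubling values
  have hadd := pell_add P hP hP0 hP1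
  have hE : P (2 * n + 3) = P (n + 2) * P (n + 2) + P (n + 1) * P (n + 1) := by
    have h := hadd (n + 1) (n + 1)
    have e1 : n + 1 + (n + 1) + 1 = 2 * n + 3 := by ring
    have e2 : n + 1 + 1 = n + 2 := by ring
    rw [e1, e2] at h; exact h
  have hE' : P (2 * n + 3) =
      (2 * P (n + 1) + P n) * (2 * P (n + 1) + P n) + P (n + 1) * P (n + 1) := by
    rw [hE, hB]
  have hF : P (2 * n + 4) = P (n + 3) * P (n + 2) + P (n + 2) * P (n + 1) := by
    have h := hadd (n + 2) (n + 1)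
    have e1 : n + 2 + (n + 1) + 1 = 2 * n + 4 := by ring
    have e2 : n + 2 + 1 = n + 3 := by ring
    have e3 : n + 1 + 1 = n + 2 := by ring
    rw [e1, e2, e3] at h; exact h
  have hG : Q (2 * n + 3) =
      2 * ((5 * P (n + 1) + 2 * P n) * (2 * P (n + 1) + P n) +
        (2 * P (n + 1) + P n) * P (n + 1) -
        ((2 * P (n + 1) + P n) * (2 * P (n + 1) + P n) + P (n + 1) * P (n + 1))) := by
    have h := pellLucas_eq P Q hP hP0 hP1 hQ hQ0 hQ1 (2 * n + 3)
    have e : 2 * n + 3 + 1 = 2 * n + 4 := by ring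
    rw [e, hF, hB, hC, hE'] at h
    exact h
  -- unfold and normalize indices
  have e1 : n + 1 + 1 = n + 2 := by ring
  have e2 : n + 1 + 2 = n + 3 := by ring
  have e3 : n + 1 + 3 = n + 4 := by ring
  have e4 : n - 1 + 1 = n := by ring
  have e5 : n - 1 + 2 = n + 1 := by ring
  have e6 : n - 1 + 3 = n + 2 := by ring
  rw [BP, BP, e1, e2, e3, e4, e5, e6, sq_expand, sq_expand, hA, hB, hC, hD, hE', hG]
  push_cast
  module
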